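/- Let A₁, …, A_n be components and let N = N_{A₁} × … × N_{A_n} be the product of their corresponding labelled Petri nets. For all infinite traces σ, α of N and all words σᵢ, αᵢ such that P_i(σ) = σᵢ and P_i(α) = αᵢ: if obs(σ) = obs(α), then obs(σᵢ) = obs(αᵢ). -/

import Mathlib

/-! Labelled Petri nets -/

structure PetriNet (P : Type*) (T : Type*) (Λ : Type*) where
  flowPT : P → T → Prop
  flowTP : T → P → Prop
  label : T → Λ
  init : Set P

namespace PetriNet

variable {P T Λ : Type*}

def preset (N : PetriNet P T Λ) (t : T) : Set P := {p | N.flowPT p t}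

def postset (N : PetriNet P T Λ) (t : T) : Set P := {p | N.flowTP t p}

def fire (N : PetriNet P T Λ) (M : Set P) (t : T) : Set P := (M \ N.preset t) ∪ N.postset t

/-- An (infinite) run of a Petri net. -/
structure Run (N : PetriNet P T Λ) where
  marking : ℕ → Set P
  trans : ℕ → T
  h0 : marking 0 = N.init
  henabled : ∀ k, N.preset (trans k) ⊆ marking k
  hstep : ∀ k, marking (k + 1) = N.fire (marking k) (trans k)

/-- The trace of a run: the infinite word of labels of the fired transitions. -/
def Run.trace {N : PetriNet P T Λ} (r : Run N) : ℕ → Λ := fun k => N.label (r.trans k)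

/-- The set of infinite traces of a Petri net. -/
def InfTraces (N : PetriNet P T Λ) : Set (ℕ → Λ) := {σ | ∃ r : Run N, r.trace = σ}

/-- Reachable markings. -/
inductive ReachM (N : PetriNet P T Λ) : Set P → Prop
  | init : ReachM N N.init
  | step (M : Set P) (t : T) : ReachM N M → N.preset t ⊆ M → ReachM N (N.fire M t)

/-- A net is live if every reachable marking enables some transition. -/
def Live (N : PetriNet P T Λ) : Prop := ∀ M, N.ReachM M → ∃ t, N.preset t ⊆ M

/-- `FireSeq N M l M'`: the finite sequence `l` of transitions can fire from `M`, yielding `M'`. -/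
inductive FireSeq (N : PetriNet P T Λ) : Set P → List T → Set P → Prop
  | nil (M : Set P) : FireSeq N M [] M
  | cons (M : Set P) (t : T) (l : List T) (M' : Set P) :
      N.preset t ⊆ M → FireSeq N (N.fire M t) l M' → FireSeq N M (t :: l) M'

/-- The net has no cycle of unobservable transitions. -/
def NoUnobsCycle (N : PetriNet P T Λ) (Obs : Set Λ) : Prop :=
  ¬ ∃ (M : Set P) (l : List T), N.ReachM M ∧ l ≠ [] ∧ (∀ t ∈ l, N.label t ∉ Obs) ∧
      N.FireSeq M l M

end PetriNet

/-! Finite-or-infinite words as `ℕ → Option Λ`, observable projection via filtering. -/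

/-- View an infinite word as a (possibly finite) word. -/
def injWord {Λ : Type*} (σ : ℕ → Λ) : ℕ → Option Λ := fun n => some (σ n)

open scoped Classical in
/-- Erase from the word `w` all letters not in `S`, i.e. keep the subsequence of letters
belonging to `S` (the result is `none` from some point on if only finitely many remain). -/
noncomputable def filterWord {Λ : Type*} (S : Set Λ) (w : ℕ → Option Λ) : ℕ → Option Λ :=
  fun n =>
    if {k | ∃ a ∈ S, w k = some a}.Infinite ∨ n < {k | ∃ a ∈ S, w k = some a}.ncard then
      w (Nat.nth (fun k => ∃ a ∈ S, w k = some a) n)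
    else none

/-- Observable projection of a (possibly finite) word. -/
noncomputable def obsWord {Λ : Type*} (Obs : Set Λ) (w : ℕ → Option Λ) : ℕ → Option Λ :=
  filterWord Obs w

/-- Observable projection of an infinite word. -/
noncomputable def obsInf {Λ : Type*} (Obs : Set Λ) (σ : ℕ → Λ) : ℕ → Option Λ :=
  filterWord Obs (injWord σ)

/-- The letter `f` occurs in the infinite word `σ`. -/
def occursInf {Λ : Type*} (f : Λ) (σ : ℕ → Λ) : Prop := ∃ k, σ k = f

/-- The letter `f` occurs in the (possibly finite) word `w`. -/
def occursWord {Λ : Type*} (f : Λ) (w : ℕ → Option Λ) : Prop := ∃ k, w k = some f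

namespace PetriNet

variable {P T Λ : Type*}

/-- The fault `f` is diagnosable in the net `N`. -/
def FaultDiagnosable (Obs : Set Λ) (N : PetriNet P T Λ) (f : Λ) : Prop :=
  ∀ σ ∈ N.InfTraces, ∀ α ∈ N.InfTraces,
    obsInf Obs σ = obsInf Obs α → occursInf f σ → occursInf f α

/-- The net `N` is diagnosable: every fault of `Flt` is diagnosable in it. -/
def Diagnosable (Obs Flt : Set Λ) (N : PetriNet P T Λ) : Prop :=
  ∀ f ∈ Flt, N.FaultDiagnosable Obs f

/-- The `f`-fault-free version of a net: all transitions labelled `f` are deleted. -/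
def faultFree (N : PetriNet P T Λ) (f : Λ) : PetriNet P {t : T // N.label t ≠ f} Λ where
  flowPT p t := N.flowPT p t.1
  flowTP t p := N.flowTP t.1 p
  label t := N.label t.1
  init := N.init

end PetriNet

/-! Components: deterministic automata with a given alphabet. -/

structure Component (Q : Type*) (Λ : Type*) where
  alph : Set Λ
  delta : Q → Λ → Option Q
  start : Q
  dom : ∀ q a q', delta q a = some q' → a ∈ alph

namespace Component

variable {Q Λ : Type*}

/-- The infinite traces of a component: words labelling infinite paths from the initial state. -/
def InfTraces (C : Component Q Λ) : Set (ℕ → Λ) :=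
  {σ | ∃ π : ℕ → Q, π 0 = C.start ∧ ∀ k, C.delta (π k) (σ k) = some (π (k + 1))}

inductive Reach (C : Component Q Λ) : Q → Prop
  | start : Reach C C.start
  | step (q : Q) (a : Λ) (q' : Q) : Reach C q → C.delta q a = some q' → Reach C q'

/-- A component is live if every reachable state enables some action. -/
def Live (C : Component Q Λ) : Prop := ∀ q, C.Reach q → ∃ a q', C.delta q a = some q'

/-- Extension of the transition function to finite words. -/
def deltaStar (C : Component Q Λ) : Q → List Λ → Option Q
  | q, [] => some q
  | q, a :: l =>
    match C.delta q a with
    | some q' => C.deltaStar q' l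
    | none => none

/-- The component has no cycle of unobservable actions. -/
def NoUnobsCycle (C : Component Q Λ) (Obs : Set Λ) : Prop :=
  ¬ ∃ (q : Q) (l : List Λ), C.Reach q ∧ l ≠ [] ∧ (∀ a ∈ l, a ∉ Obs) ∧
      C.deltaStar q l = some q

/-- The fault `f` is diagnosable in the component `C`. -/
def FaultDiagnosable (Obs : Set Λ) (C : Component Q Λ) (f : Λ) : Prop :=
  ∀ σ ∈ C.InfTraces, ∀ α ∈ C.InfTraces,
    obsInf Obs σ = obsInf Obs α → occursInf f σ → occursInf f α

/-- The component `C` is diagnosable: every fault of `Flt` is diagnosable in it. -/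
def Diagnosable (Obs Flt : Set Λ) (C : Component Q Λ) : Prop :=
  ∀ f ∈ Flt, C.FaultDiagnosable Obs f

/-- The transitions of a component, as triples `(q, a, q')` with `δ q a = q'`. -/
def Trans (C : Component Q Λ) : Type _ :=
  {x : Q × Λ × Q // C.delta x.1 x.2.1 = some x.2.2}

/-- The labelled Petri net corresponding to a component. -/
def toNet (C : Component Q Λ) : PetriNet Q C.Trans Λ where
  flowPT p t := p = t.1.1
  flowTP t p := p = t.1.2.2
  label t := t.1.2.1
  init := {C.start}

end Component

/-! Labelled Petri nets equipped with an alphabet, and their product. -/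

structure ANet (P : Type*) (T : Type*) (Λ : Type*) where
  net : PetriNet P T Λ
  alph : Set Λ
  labmem : ∀ t, net.label t ∈ alph

/-- The net of a component, equipped with the component's alphabet. -/
def Component.toANet {Q Λ : Type*} (C : Component Q Λ) : ANet Q C.Trans Λ :=
  ⟨C.toNet, C.alph, fun t => C.dom t.1.1 t.1.2.1 t.1.2.2 t.2⟩

/-- A synchronized transition of the product of the nets `Ns`: a label together with a choice
of one transition with that label from every component net whose alphabet contains the label
(components whose alphabet does not contain the label do not participate). -/
structure SyncTrans {ι : Type*} {P T : ι → Type*} {Λ : Type*} (Ns : ∀ i, ANet (P i) (T i) Λ) where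
  lab : Λ
  choice : ∀ i, Option (T i)
  used : ∃ i, lab ∈ (Ns i).alph
  sync : ∀ i, lab ∈ (Ns i).alph → ∃ t, choice i = some t ∧ (Ns i).net.label t = lab
  not_mem : ∀ i, lab ∉ (Ns i).alph → choice i = none

/-- The product of labelled Petri nets, synchronizing on shared actions. -/
def ANet.prod {ι : Type*} {P T : ι → Type*} {Λ : Type*} (Ns : ∀ i, ANet (P i) (T i) Λ) :
    PetriNet (Σ i, P i) (SyncTrans Ns) Λ where
  flowPT p t := ∃ u, t.choice p.1 = some u ∧ (Ns p.1).net.flowPT p.2 u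
  flowTP t p := ∃ u, t.choice p.1 = some u ∧ (Ns p.1).net.flowTP u p.2
  label t := t.lab
  init := {p | p.2 ∈ (Ns p.1).net.init}

/-- `IsProjOf Ns i σ w`: the word `w` is the projection on component `i` of the infinite
trace `σ` of the product net, i.e. there is a run of the product net with trace `σ` whose
projection on component `i` (keeping exactly the transitions whose label is in the `i`-th
alphabet) has trace `w`. -/
def IsProjOf {ι : Type*} {P T : ι → Type*} {Λ : Type*} (Ns : ∀ i, ANet (P i) (T i) Λ)
    (i : ι) (σ : ℕ → Λ) (w : ℕ → Option Λ) : Prop :=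
  ∃ r : (ANet.prod Ns).Run, r.trace = σ ∧ filterWord (Ns i).alph (injWord σ) = w

/-- The `f`-fault-free version of an alphabet-equipped net. -/
def ANet.faultFree {P T Λ : Type*} (N : ANet P T Λ) (f : Λ) :
    ANet P {t : T // N.net.label t ≠ f} Λ :=
  ⟨N.net.faultFree f, N.alph, fun t => N.labmem t.1⟩

/-- The family of nets used to build `Nⁱ`: component `i` itself together with the
`f`-fault-free versions of all the other components (the subtype condition is trivial
for `j = i` and says "not labelled `f`" for `j ≠ i`). -/
def exceptNet {ι : Type*} {Q : ι → Type*} {Λ : Type*} (C : ∀ j, Component (Q j) Λ)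
    (f : Λ) (i j : ι) :
    ANet (Q j) {t : (C j).Trans // j ≠ i → (C j).toNet.label t ≠ f} Λ where
  net :=
    { flowPT := fun p t => (C j).toNet.flowPT p t.1
      flowTP := fun t p => (C j).toNet.flowTP t.1 p
      label := fun t => (C j).toNet.label t.1
      init := (C j).toNet.init }
  alph := (C j).alph
  labmem := fun t => (C j).dom t.1.1.1 t.1.1.2.1 t.1.1.2.2 t.1.2

/-- The net `Nⁱ`: the product of `N_{A_i}` with the `f`-fault-free versions of all the
other components. -/
def Nhat {ι : Type*} {Q : ι → Type*} {Λ : Type*} (C : ∀ j, Component (Q j) Λ)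
    (f : Λ) (i : ι) :=
  ANet.prod (fun j => exceptNet C f i j)

/-! The product automaton. -/

open scoped Classical in
noncomputable def prodDelta {ι : Type*} {Q : ι → Type*} {Λ : Type*}
    (C : ∀ i, Component (Q i) Λ) (q : ∀ i, Q i) (a : Λ) : Option (∀ i, Q i) :=
  if (∃ i, a ∈ (C i).alph) ∧ ∀ i, a ∈ (C i).alph → (C i).delta (q i) a ≠ none then
    some (fun i => ((C i).delta (q i) a).getD (q i))
  else none

/-- The product automaton `A₁ × ⋯ × A_n`. -/
noncomputable def prodComponent {ι : Type*} {Q : ι → Type*} {Λ : Type*}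
    (C : ∀ i, Component (Q i) Λ) : Component (∀ i, Q i) Λ where
  alph := ⋃ i, (C i).alph
  delta := prodDelta C
  start := fun i => (C i).start
  dom := by
    intro q a q' h
    unfold prodDelta at h
    split_ifs at h with hc
    · exact Set.mem_iUnion.2 hc.1

/-! The verifier. -/

/-- Labels of the verifier: either a common (fused, observable) label, or a label of a
local transition of the first replica (`a¹`, written `.inr (.inl a)`), or of the second
replica (`a²`, written `.inr (.inr a)`). -/
abbrev VerLabel (Λ : Type*) := Λ ⊕ (Λ ⊕ Λ)

/-- Transitions of the verifier: fused pairs of an observable transition of the first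
replica with a same-labelled transition of the second (fault-free) replica, or local
unobservable transitions of the first replica, or local unobservable non-`f` transitions
of the second replica. -/
def VerTrans {P T Λ : Type*} (N : PetriNet P T Λ) (Obs : Set Λ) (f : Λ) : Type _ :=
  {x : T × T // N.label x.1 ∈ Obs ∧ N.label x.2 = N.label x.1 ∧ N.label x.2 ≠ f} ⊕
    ({t : T // N.label t ∉ Obs} ⊕ {t : T // N.label t ∉ Obs ∧ N.label t ≠ f})

/-- The verifier `V_f` of `N` with respect to the fault `f`: two replicas of `N` put
side by side, the `f`-labelled transitions removed from the second replica, and each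
observable transition of the first replica fused with each same-labelled transition of
the second replica. -/
def verifier {P T Λ : Type*} (N : PetriNet P T Λ) (Obs : Set Λ) (f : Λ) :
    PetriNet (P ⊕ P) (VerTrans N Obs f) (VerLabel Λ) where
  flowPT p t :=
    match p, t with
    | .inl p, .inl x => N.flowPT p x.1.1
    | .inr p, .inl x => N.flowPT p x.1.2
    | .inl p, .inr (.inl t) => N.flowPT p t.1
    | .inr p, .inr (.inr t) => N.flowPT p t.1
    | _, _ => False
  flowTP t p :=
    match p, t with
    | .inl p, .inl x => N.flowTP x.1.1 p
    | .inr p, .inl x => N.flowTP x.1.2 p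
    | .inl p, .inr (.inl t) => N.flowTP t.1 p
    | .inr p, .inr (.inr t) => N.flowTP t.1 p
    | _, _ => False
  label t :=
    match t with
    | .inl x => Sum.inl (N.label x.1.1)
    | .inr (.inl t) => Sum.inr (Sum.inl (N.label t))
    | .inr (.inr t) => Sum.inr (Sum.inr (N.label t))
  init := Sum.inl '' N.init ∪ Sum.inr '' N.init

lemma fw_valid_iff {s : Set ℕ} {k : ℕ} :
    (s.Infinite ∨ k < s.ncard) ↔ ∀ hf : s.Finite, k < hf.toFinset.card := by
  constructor
  · rintro (h | h) hf
    · exact absurd hf h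
    · rwa [Set.ncard_eq_toFinset_card s hf] at h
  · intro h
    by_cases hf : s.Finite
    · exact Or.inr (by rw [Set.ncard_eq_toFinset_card s hf]; exact h hf)
    · exact Or.inl hf

lemma filterWord_pos {Λ : Type*} {S : Set Λ} {w : ℕ → Option Λ} {n : ℕ}
    (h : ∀ hf : ({k | ∃ a ∈ S, w k = some a} : Set ℕ).Finite, n < hf.toFinset.card) :
    filterWord S w n = w (Nat.nth (fun k => ∃ a ∈ S, w k = some a) n) := by
  rw [filterWord, if_pos (fw_valid_iff.2 h)]

lemma filterWord_neg {Λ : Type*} {S : Set Λ} {w : ℕ → Option Λ} {n : ℕ}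
    (h : ¬ ∀ hf : ({k | ∃ a ∈ S, w k = some a} : Set ℕ).Finite, n < hf.toFinset.card) :
    filterWord S w n = none := by
  rw [filterWord, if_neg (fun hv => h (fw_valid_iff.1 hv))]

lemma filter_filter {Λ : Type*} (S S' : Set Λ) (w : ℕ → Option Λ) :
    filterWord S (filterWord S' w) = filterWord (S ∩ S') w := by
  classical
  let pA : ℕ → Prop := fun k => ∃ a ∈ S', w k = some a
  let pB : ℕ → Prop := fun k => ∃ a ∈ S, filterWord S' w k = some a
  let pC : ℕ → Prop := fun k => ∃ a ∈ (S ∩ S' : Set Λ), w k = some a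
  let V : ℕ → Prop := fun k => ∀ hf : (setOf pA).Finite, k < hf.toFinset.card
  have hVanti : ∀ {j k : ℕ}, j ≤ k → V k → V j := fun hjk hk hf =>
    lt_of_le_of_lt hjk (hk hf)
  have hnthA : ∀ {k}, V k → pA (Nat.nth pA k) := fun hk => Nat.nth_mem _ hk
  have hw' : ∀ {k}, V k → filterWord S' w k = w (Nat.nth pA k) := fun hk =>
    filterWord_pos hk
  have hBiff : ∀ k, pB k ↔ V k ∧ pC (Nat.nth pA k) := by
    intro k
    constructor
    · rintro ⟨a, haS, hka⟩
      have hVk : V k := by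
        by_contra hV'
        rw [filterWord_neg hV'] at hka
        exact Option.some_ne_none a hka.symm
      rw [hw' hVk] at hka
      obtain ⟨b, hbS', hb⟩ := hnthA hVk
      have hab : a = b := Option.some.inj (hka ▸ hb)
      exact ⟨hVk, ⟨a, ⟨haS, hab ▸ hbS'⟩, hka⟩⟩
    · rintro ⟨hVk, a, ⟨haS, _⟩, hka⟩
      exact ⟨a, haS, by rw [hw' hVk]; exact hka⟩
  have hInjV : Set.InjOn (Nat.nth pA) (setOf V) := by
    intro j hj k hk hjk
    by_contra hne
    rcases Nat.lt_or_ge j k with h | h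
    · exact absurd hjk (Nat.nth_lt_nth' h hk).ne
    · exact absurd hjk.symm (Nat.nth_lt_nth' (lt_of_le_of_ne h (Ne.symm hne)) hj).ne
  have hBsubV : setOf pB ⊆ setOf V := fun k hk => ((hBiff k).1 hk).1
  have hInjB : Set.InjOn (Nat.nth pA) (setOf pB) := hInjV.mono hBsubV
  have hCimg : setOf pC = Nat.nth pA '' setOf pB := by
    ext m
    constructor
    · intro hm
      have hmA : pA m := by
        obtain ⟨a, ⟨haS, haS'⟩, h⟩ := hm
        exact ⟨a, haS', h⟩
      have hVc : V (Nat.count pA m) := fun hf => Nat.count_lt_card hf hmA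
      refine ⟨Nat.count pA m, ?_, Nat.nth_count hmA⟩
      exact (hBiff _).2 ⟨hVc, by rw [Nat.nth_count hmA]; exact hm⟩
    · rintro ⟨k, hk, rfl⟩
      exact ((hBiff k).1 hk).2
  have hInf : (setOf pC).Infinite ↔ (setOf pB).Infinite := by
    rw [hCimg]; exact Set.infinite_image_iff hInjB
  have hncard : (setOf pC).ncard = (setOf pB).ncard := by
    rw [hCimg]; exact Set.ncard_image_of_injOn hInjB
  have hVBC : ∀ n, (∀ hf : (setOf pB).Finite, n < hf.toFinset.card) ↔
      (∀ hf : (setOf pC).Finite, n < hf.toFinset.card) := by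
    intro n
    rw [← fw_valid_iff, ← fw_valid_iff, hInf, hncard]
  funext n
  by_cases hn : ∀ hf : (setOf pB).Finite, n < hf.toFinset.card
  · have hnC := (hVBC n).1 hn
    have hBk : pB (Nat.nth pB n) := Nat.nth_mem n hn
    obtain ⟨hVk, hCk⟩ := (hBiff _).1 hBk
    have hcount : Nat.count pC (Nat.nth pA (Nat.nth pB n)) = Nat.count pB (Nat.nth pB n) := by
      rw [Nat.count_eq_card_filter_range, Nat.count_eq_card_filter_range]
      refine (Finset.card_nbij (Nat.nth pA) ?_ ?_ ?_).symm
      · intro j hj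
        simp only [Finset.mem_coe, Finset.mem_filter, Finset.mem_range] at hj ⊢
        obtain ⟨hjlt, hjB⟩ := hj
        exact ⟨Nat.nth_lt_nth' hjlt hVk, ((hBiff j).1 hjB).2⟩
      · intro x hx y hy hxy
        simp only [Finset.coe_filter, Set.mem_setOf_eq] at hx hy
        exact hInjB hx.2 hy.2 hxy
      · intro m hm
        simp only [Finset.coe_filter, Set.mem_setOf_eq, Finset.mem_range] at hm
        obtain ⟨hmlt, hmC⟩ := hm
        have hmC' : m ∈ Nat.nth pA '' setOf pB := hCimg ▸ hmC
        obtain ⟨j, hjB, rfl⟩ := hmC'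
        refine ⟨j, ?_, rfl⟩
        simp only [Finset.coe_filter, Set.mem_setOf_eq, Finset.mem_range]
        refine ⟨?_, hjB⟩
        by_contra hjk
        exact absurd hmlt (not_lt.2 (Nat.nth_le_nth' (not_lt.1 hjk) (hBsubV hjB)))
    have hcn : Nat.count pB (Nat.nth pB n) = n := Nat.count_nth hn
    have hnthC : Nat.nth pC n = Nat.nth pA (Nat.nth pB n) := by
      conv_lhs => rw [← hcn, ← hcount]
      exact Nat.nth_count hCk
    rw [filterWord_pos hn, filterWord_pos hnC]
    show filterWord S' w (Nat.nth pB n) = w (Nat.nth pC n)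
    rw [hw' hVk, hnthC]
  · have hnC : ¬ ∀ hf : (setOf pC).Finite, n < hf.toFinset.card :=
      fun h => hn ((hVBC n).2 h)
    rw [filterWord_neg hn, filterWord_neg hnC]

/-- Let `A₁, …, A_n` be components and `N = N_{A₁} × ⋯ × N_{A_n}` the product
of their corresponding labelled Petri nets (all components synchronize on their shared actions,
which are observable). For all infinite traces `σ, α` of `N` and all words `σᵢ, αᵢ` such that
`P_i(σ) = σᵢ` and `P_i(α) = αᵢ`: if `obs(σ) = obs(α)`, then `obs(σᵢ) = obs(αᵢ)`. -/
theorem obs_eq_implies_proj_obs_eq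
    {ι : Type*} [Finite ι] [Nonempty ι] {Q : ι → Type*} [∀ i, Finite (Q i)]
    {Λ : Type*} [Finite Λ] (Obs Flt : Set Λ) (hFlt : Flt ⊆ Obsᶜ)
    (C : ∀ i, Component (Q i) Λ)
    (hlive : ∀ i, (C i).Live) (hcyc : ∀ i, (C i).NoUnobsCycle Obs)
    (hshared : ∀ i j, i ≠ j → (C i).alph ∩ (C j).alph ⊆ Obs)
    (σ α : ℕ → Λ)
    (hσ : σ ∈ (ANet.prod fun i => (C i).toANet).InfTraces)
    (hα : α ∈ (ANet.prod fun i => (C i).toANet).InfTraces)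
    (i : ι) (w v : ℕ → Option Λ)
    (hw : IsProjOf (fun i => (C i).toANet) i σ w)
    (hv : IsProjOf (fun i => (C i).toANet) i α v)
    (hobs : obsInf Obs σ = obsInf Obs α) :
    obsWord Obs w = obsWord Obs v := by
  obtain ⟨_, _, hwf⟩ := hw
  obtain ⟨_, _, hvf⟩ := hv
  have h1 : obsWord Obs w = filterWord ((C i).toANet.alph) (obsInf Obs σ) := by
    rw [← hwf]
    show filterWord Obs _ = _
    rw [filter_filter, Set.inter_comm, ← filter_filter]
    rfl
  have h2 : obsWord Obs v = filterWord ((C i).toANet.alph) (obsInf Obs α) := by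
    rw [← hvf]
    show filterWord Obs _ = _
    rw [filter_filter, Set.inter_comm, ← filter_filter]
    rfl
  rw [h1, h2, hobs]
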